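/- Let p ≡ 1 (mod 4) be a prime and let a be an odd integer with a^2 + b^2 = p for some integer b. Then gcd(1 + 2p + a^2·p, 2^p - 1) = 1 and gcd(1 - 2p + a^2·p, 2^p - 1) = 1. -/

import Mathlib

lemma merseFac (p r : ℕ) (hp : p.Prime) (hr : r.Prime) (h : r ∣ 2 ^ p - 1) :
    p ∣ r - 1 ∧ r % 2 = 1 := by
  have h2p : 2 ≤ 2 ^ p := Nat.one_lt_two_pow_iff.mpr hp.pos.ne'
  have hrodd : r % 2 = 1 := by
    rcases hr.eq_two_or_odd with rfl | h'
    · obtain ⟨k, hk⟩ := h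
      have h2 : 2 ∣ 2 ^ p := dvd_pow_self 2 hp.pos.ne'
      omega
    · exact h'
  have hr2 : r ≠ 2 := by omega
  haveI : Fact r.Prime := ⟨hr⟩
  have hmod : ((2 ^ p : ℕ) : ZMod r) = ((1 : ℕ) : ZMod r) :=
    (ZMod.natCast_eq_natCast_iff _ _ _).mpr
      ((Nat.modEq_iff_dvd' (by omega)).mpr h).symm
  have hpow : (2 : ZMod r) ^ p = 1 := by push_cast at hmod; simpa using hmod
  have hord : orderOf (2 : ZMod r) ∣ p := orderOf_dvd_of_pow_eq_one hpow
  have h2ne1 : (2 : ZMod r) ≠ 1 := by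
    intro hh
    have : ((2 : ℕ) : ZMod r) = ((1 : ℕ) : ZMod r) := by push_cast; exact hh
    have := (ZMod.natCast_eq_natCast_iff _ _ _).mp this
    have := (Nat.modEq_iff_dvd' (by norm_num)).mp this.symm
    have := Nat.le_of_dvd (by norm_num) this
    have := hr.two_le
    omega
  have hordne1 : orderOf (2 : ZMod r) ≠ 1 := fun hh => h2ne1 (orderOf_eq_one_iff.mp hh)
  have hordp : orderOf (2 : ZMod r) = p :=
    ((hp.eq_one_or_self_of_dvd _ hord).resolve_left hordne1)
  have h2ne0 : (2 : ZMod r) ≠ 0 := by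
    intro hh
    have : ((2 : ℕ) : ZMod r) = 0 := by push_cast; exact hh
    have := (ZMod.natCast_eq_zero_iff _ _).mp this
    have := Nat.le_of_dvd (by norm_num) this
    have := hr.two_le
    omega
  refine ⟨hordp ▸ ZMod.orderOf_dvd_card_sub_one h2ne0, hrodd⟩

lemma key13 (p : ℕ) (hp : p.Prime) (hp5 : 5 ≤ p) (N : ℤ) (hEven : 2 ∣ N)
    (hmod : (p : ℤ) ∣ N - 1) (hbound : |N| ≤ 1 + 2 * p + (p : ℤ) ^ 2) :
    Int.gcd N (2 ^ p - 1) = 1 := by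
  by_contra hg
  have hM0 : (2 : ℤ) ^ p - 1 ≠ 0 := by
    have : (2 : ℤ) ≤ 2 ^ p := by
      calc (2:ℤ) = 2 ^ 1 := by ring
      _ ≤ 2 ^ p := pow_le_pow_right₀ (by norm_num) (by omega)
    omega
  have hgne : Int.gcd N (2 ^ p - 1) ≠ 0 := by
    simp [Int.gcd_eq_zero_iff, hM0]
  obtain ⟨r, hr, hrg⟩ := Nat.exists_prime_and_dvd (fun h1 => hg h1)
  have hrN : (r : ℤ) ∣ N := (Int.natCast_dvd_natCast.mpr hrg).trans (Int.gcd_dvd_left _ _)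
  have hcast : ((2 ^ p - 1 : ℕ) : ℤ) = 2 ^ p - 1 := by
    push_cast [Nat.one_le_two_pow]
    ring
  have hrM : r ∣ 2 ^ p - 1 := by
    have : (r : ℤ) ∣ ((2 ^ p - 1 : ℕ) : ℤ) := by
      rw [hcast]
      exact (Int.natCast_dvd_natCast.mpr hrg).trans (Int.gcd_dvd_right _ _)
    exact_mod_cast this
  obtain ⟨hpr, hrodd⟩ := merseFac p r hp hr hrM
  have hr2 : 2 ≤ r := hr.two_le
  have hpodd : p % 2 = 1 := by
    rcases hp.eq_two_or_odd with rfl | h' <;> omega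
  -- r ≥ 2p + 1
  have hrge : 2 * p + 1 ≤ r := by
    obtain ⟨k, hk⟩ := hpr
    have hk0 : k ≠ 0 := by rintro rfl; omega
    have hk1 : k ≠ 1 := by
      rintro rfl
      omega
    have : p * 2 ≤ p * k := Nat.mul_le_mul_left p (by omega)
    omega
  obtain ⟨M, hM⟩ := hrN
  have hrcast : ((r : ℤ) - 1) = ((r - 1 : ℕ) : ℤ) := by
    push_cast [Nat.cast_sub hr.one_lt.le]
    ring
  have hMeven : (2 : ℤ) ∣ M := by
    obtain ⟨c, hc⟩ := hEven
    have hevN : Even N := ⟨c, by omega⟩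
    rw [hM] at hevN
    rcases Int.even_mul.mp hevN with h' | h'
    · exfalso
      have := Nat.even_iff.mp (Int.even_coe_nat r |>.mp h')
      omega
    · exact h'.two_dvd
  have hpr1 : (p : ℤ) ∣ ((r : ℤ) - 1) := by
    rw [hrcast]
    exact_mod_cast hpr
  have hpM : (p : ℤ) ∣ M - 1 := by
    have heq : M - 1 = (N - 1) - ((r : ℤ) - 1) * M := by rw [hM]; ring
    rw [heq]
    exact dvd_sub hmod (hpr1.mul_right M)
  have hM1 : M - 1 ≠ 0 := by
    intro h'
    have : M = 1 := by omega
    omega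
  have hMabs : (p : ℤ) ≤ |M - 1| := Int.le_of_dvd (abs_pos.mpr hM1) ((dvd_abs _ _).mpr hpM)
  have hMge : (p : ℤ) - 1 ≤ |M| := by
    rcases abs_cases (M - 1) with ⟨h1, h2⟩ | ⟨h1, h2⟩ <;> rcases abs_cases M with ⟨h3, h4⟩ | ⟨h3, h4⟩ <;> omega
  have hNabs : |N| = (r : ℤ) * |M| := by
    rw [hM, abs_mul, abs_of_nonneg (by positivity : (0:ℤ) ≤ (r:ℤ))]
  have hrgeZ : 2 * (p : ℤ) + 1 ≤ (r : ℤ) := by exact_mod_cast hrge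
  have hp5Z : (5 : ℤ) ≤ (p : ℤ) := by exact_mod_cast hp5
  have hMnn : (0 : ℤ) ≤ |M| := abs_nonneg M
  rw [hNabs] at hbound
  nlinarith [mul_le_mul hrgeZ hMge (by linarith) (by positivity : (0:ℤ) ≤ (r:ℤ))]


theorem stmt13 (p : ℕ) (hp : p.Prime) (hp4 : p % 4 = 1) (a b : ℤ)
    (ha : Odd a) (hab : a ^ 2 + b ^ 2 = (p : ℤ)) :
    Int.gcd (1 + 2 * (p : ℤ) + a ^ 2 * p) (2 ^ p - 1) = 1 ∧
    Int.gcd (1 - 2 * (p : ℤ) + a ^ 2 * p) (2 ^ p - 1) = 1 := by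
  have hp5 : 5 ≤ p := by have := hp.two_le; omega
  have hpZ : (5 : ℤ) ≤ (p : ℤ) := by exact_mod_cast hp5
  have hpodd : Odd (p : ℤ) := by rw [Int.odd_iff]; omega
  have haodd : (a ^ 2 * (p : ℤ)) % 2 = 1 := Int.odd_iff.mp ((ha.pow).mul hpodd)
  have hsq : a ^ 2 ≤ (p : ℤ) := by nlinarith [sq_nonneg b]
  have ha0 : a ≠ 0 := by rintro rfl; simp [Int.odd_iff] at ha
  have hsq1 : 1 ≤ a ^ 2 := by
    have : 0 < a ^ 2 := by positivity
    omega
  refine ⟨key13 p hp hp5 _ (by omega) ⟨a ^ 2 + 2, by ring⟩ ?_,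
          key13 p hp hp5 _ (by omega) ⟨a ^ 2 - 2, by ring⟩ ?_⟩ <;>
    rw [abs_le] <;> constructor <;> nlinarith
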